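/- Let γ be a centered Gaussian measure on a separable Banach space B. Then the Cameron–Martin norm satisfies |h|_{H(γ)} = sup{ f(h) : f ∈ B*, C_γ(f)(f) ≤ 1 }, and H(γ) = { h ∈ B : |h|_{H(γ)} < ∞ }. -/

import Mathlib

open MeasureTheory ProbabilityTheory

/-- A Borel probability measure `γ` on a separable Banach space is *centered Gaussian* if every
continuous linear functional pushes it forward to a centered Gaussian on `ℝ`. -/
def IsCenteredGaussian {B : Type*} [NormedAddCommGroup B] [NormedSpace ℝ B]
    [MeasurableSpace B] (γ : Measure B) : Prop :=
  ∀ L : B →L[ℝ] ℝ, ∃ v : NNReal, γ.map L = gaussianReal 0 v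


section Aux

variable {B : Type*} [NormedAddCommGroup B] [NormedSpace ℝ B] [MeasurableSpace B]
  (γ : MeasureTheory.Measure B)
  {K : Type*} [NormedAddCommGroup K] [InnerProductSpace ℝ K]
  (e : K →ₗᵢ[ℝ] Lp ℝ 2 γ)

/-- The submodule of `K` consisting of elements represented by continuous functionals. -/
noncomputable def cmDsub : Submodule ℝ K where
  carrier := {k : K | ∃ g : B →L[ℝ] ℝ, (e k : B → ℝ) =ᵐ[γ] ⇑g}
  add_mem' := by
    rintro x y ⟨gx, hgx⟩ ⟨gy, hgy⟩
    refine ⟨gx + gy, ?_⟩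
    have hadd : e (x + y) = e x + e y := map_add e x y
    rw [hadd]
    exact (Lp.coeFn_add (e x) (e y)).trans (hgx.add hgy)
  zero_mem' := by
    refine ⟨0, ?_⟩
    have hzero : e (0 : K) = 0 := map_zero e
    rw [hzero]
    exact Lp.coeFn_zero ℝ 2 γ
  smul_mem' := by
    rintro c x ⟨gx, hgx⟩
    refine ⟨c • gx, ?_⟩
    have hsm' : e (c • x) = c • e x := _root_.map_smul e c x
    rw [hsm']
    exact (Lp.coeFn_smul c (e x)).trans (hgx.const_smul c)

/-- A choice of representing functional. -/
noncomputable def cmGsel (k : cmDsub γ e) : B →L[ℝ] ℝ := k.2.choose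

theorem cmGsel_spec (k : cmDsub γ e) :
    (e (k : K) : B → ℝ) =ᵐ[γ] ⇑(cmGsel γ e k) := k.2.choose_spec

/-- The evaluation linear functional on `cmDsub`. -/
noncomputable def cmPsiLin (b : B)
    (hwd : ∀ (k : cmDsub γ e) (g : B →L[ℝ] ℝ),
      (e (k : K) : B → ℝ) =ᵐ[γ] ⇑g → cmGsel γ e k b = g b) :
    cmDsub γ e →ₗ[ℝ] ℝ where
  toFun k := cmGsel γ e k b
  map_add' x y := by
    have hsum : (e ((x + y : cmDsub γ e) : K) : B → ℝ)
        =ᵐ[γ] ⇑(cmGsel γ e x + cmGsel γ e y) := by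
      have hco : ((x + y : cmDsub γ e) : K) = (x : K) + (y : K) := rfl
      have hadd : e ((x : K) + (y : K)) = e (x : K) + e (y : K) := map_add e _ _
      rw [hco, hadd]
      exact (Lp.coeFn_add (e (x : K)) (e (y : K))).trans
        ((cmGsel_spec γ e x).add (cmGsel_spec γ e y))
    have := hwd (x + y) (cmGsel γ e x + cmGsel γ e y) hsum
    simpa using this
  map_smul' c x := by
    have hsm : (e ((c • x : cmDsub γ e) : K) : B → ℝ) =ᵐ[γ] ⇑(c • cmGsel γ e x) := by
      have hco : ((c • x : cmDsub γ e) : K) = c • (x : K) := rfl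
      have hsm' : e (c • (x : K)) = c • e (x : K) := _root_.map_smul e c (x : K)
      rw [hco, hsm']
      exact (Lp.coeFn_smul c (e (x : K))).trans ((cmGsel_spec γ e x).const_smul c)
    have := hwd (c • x) (c • cmGsel γ e x) hsm
    simpa using this

end Aux

/-- Let `γ` be a centered Gaussian measure on a separable Banach space `B`,
with RKHS `K = B*_γ` (closure of `B*` in `L²(γ)`) and Cameron–Martin space `H(γ) = C_γ(B*_γ)`
realized as a Hilbert space `Hγ` embedded in `B` via `ι`, where `C_γ : K ≃ₗᵢ Hγ` is the
covariance isometry, `g(ι(C_γ f)) = ∫ f g dγ`. Then the Cameron–Martin norm satisfies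
`|h|_{H(γ)} = sup { f(h) : f ∈ B*, C_γ(f)(f) = ∫ f² dγ ≤ 1 }`, and
`H(γ) = { h ∈ B : |h|_{H(γ)} < ∞ }` (finiteness expressed as boundedness of the set of values). -/
theorem cameronMartin_norm_sup_characterization
    {B : Type*} [NormedAddCommGroup B] [NormedSpace ℝ B] [CompleteSpace B]
    [TopologicalSpace.SeparableSpace B] [MeasurableSpace B] [BorelSpace B]
    (γ : Measure B) [IsProbabilityMeasure γ] (hγ : IsCenteredGaussian γ)
    {K : Type*} [NormedAddCommGroup K] [InnerProductSpace ℝ K] [CompleteSpace K]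
    (e : K →ₗᵢ[ℝ] Lp ℝ 2 γ)
    (hsub : ∀ g : B →L[ℝ] ℝ, ∃ f : K, (e f : B → ℝ) =ᵐ[γ] g)
    (hdense : Dense {f : K | ∃ g : B →L[ℝ] ℝ, (e f : B → ℝ) =ᵐ[γ] ⇑g})
    {Hγ : Type*} [NormedAddCommGroup Hγ] [InnerProductSpace ℝ Hγ] [CompleteSpace Hγ]
    (ι : Hγ →L[ℝ] B) (hι : Function.Injective ι)
    (Cγ : K ≃ₗᵢ[ℝ] Hγ)
    (hCγ : ∀ (f : K) (g : B →L[ℝ] ℝ), g (ι (Cγ f)) = ∫ x, (e f : B → ℝ) x * g x ∂γ) :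
    (∀ h : Hγ, ‖h‖ =
      sSup {r : ℝ | ∃ f : B →L[ℝ] ℝ, (∫ x, (f x) ^ 2 ∂γ) ≤ 1 ∧ f (ι h) = r}) ∧
    Set.range ι =
      {b : B | BddAbove {r : ℝ | ∃ f : B →L[ℝ] ℝ, (∫ x, (f x) ^ 2 ∂γ) ≤ 1 ∧ f b = r}} := by
  classical
  -- the sets in question
  set S : B → Set ℝ :=
    fun b => {r : ℝ | ∃ f : B →L[ℝ] ℝ, (∫ x, (f x) ^ 2 ∂γ) ≤ 1 ∧ f b = r} with hS
  -- Key integral formula: ∫ (e f) g dγ = ⟪f, k⟫ whenever e k =ᵐ g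
  have key : ∀ (f k : K) (g : B →L[ℝ] ℝ), (e k : B → ℝ) =ᵐ[γ] ⇑g →
      ∫ x, (e f : B → ℝ) x * g x ∂γ = (inner ℝ f k : ℝ) := by
    intro f k g hg
    have h1 : ∫ x, (e f : B → ℝ) x * g x ∂γ
        = ∫ x, (e f : B → ℝ) x * (e k : B → ℝ) x ∂γ :=
      integral_congr_ae (hg.mono fun x hx => by dsimp only; rw [hx])
    rw [h1, ← e.inner_map_map f k, MeasureTheory.L2.inner_def]
    simp [RCLike.inner_apply]
    exact integral_congr_ae (Filter.Eventually.of_forall fun x => mul_comm _ _)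
  have keyg : ∀ (f k : K) (g : B →L[ℝ] ℝ), (e k : B → ℝ) =ᵐ[γ] ⇑g →
      g (ι (Cγ f)) = (inner ℝ f k : ℝ) := fun f k g hg => by
    rw [hCγ]; exact key f k g hg
  have keynorm : ∀ (k : K) (g : B →L[ℝ] ℝ), (e k : B → ℝ) =ᵐ[γ] ⇑g →
      (∫ x, (g x) ^ 2 ∂γ) = ‖k‖ ^ 2 := by
    intro k g hg
    have h1 : ∫ x, (g x) ^ 2 ∂γ = ∫ x, (e k : B → ℝ) x * g x ∂γ :=
      integral_congr_ae (hg.mono fun x hx => by dsimp only; rw [hx, pow_two])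
    rw [h1, key k k g hg, real_inner_self_eq_norm_sq]
  have zero_mem : ∀ b : B, (0 : ℝ) ∈ S b := by
    intro b
    exact ⟨0, by simp, by simp⟩
  -- upper bound
  have bddS : ∀ (h : Hγ), ∀ r ∈ S (ι h), r ≤ ‖h‖ := by
    rintro h r ⟨g, hg1, hg2⟩
    obtain ⟨k, hk⟩ := hsub g
    have hr : r = (inner ℝ (Cγ.symm h) k : ℝ) := by
      rw [← hg2, ← keyg (Cγ.symm h) k g hk, Cγ.apply_symm_apply]
    have hknorm : ‖k‖ ≤ 1 := by
      have h2 := keynorm k g hk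
      nlinarith [norm_nonneg k]
    calc r = (inner ℝ (Cγ.symm h) k : ℝ) := hr
      _ ≤ ‖Cγ.symm h‖ * ‖k‖ := real_inner_le_norm _ _
      _ ≤ ‖Cγ.symm h‖ * 1 := by
          exact mul_le_mul_of_nonneg_left hknorm (norm_nonneg _)
      _ = ‖h‖ := by rw [mul_one, Cγ.symm.norm_map]
  have part1 : ∀ h : Hγ, ‖h‖ = sSup (S (ι h)) := by
    intro h
    have hbdd : BddAbove (S (ι h)) := ⟨‖h‖, fun r hr => bddS h r hr⟩
    have hne : (S (ι h)).Nonempty := ⟨0, zero_mem _⟩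
    refine le_antisymm ?_ (csSup_le hne (bddS h))
    have main : ∀ ε : ℝ, 0 < ε → ‖h‖ - ε ≤ sSup (S (ι h)) := by
      intro ε hε
      set f := Cγ.symm h with hf
      have hnh : ‖h‖ = ‖f‖ := (Cγ.symm.norm_map h).symm
      by_cases hf0 : f = 0
      · have h0 : ‖h‖ = 0 := by rw [hnh, hf0, norm_zero]
        have := le_csSup hbdd (zero_mem (ι h))
        linarith
      · have hfn : 0 < ‖f‖ := norm_pos_iff.mpr hf0
        set u : K := ‖f‖⁻¹ • f with hu
        have hun : ‖u‖ = 1 := by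
          rw [hu, norm_smul, norm_inv, norm_norm,
            inv_mul_cancel₀ (norm_ne_zero_iff.mpr hf0)]
        set δ : ℝ := min (1 / 2) (ε / (2 * ‖f‖)) with hδ
        have hδpos : 0 < δ := lt_min (by norm_num) (div_pos hε (by positivity))
        have hδhalf : δ ≤ 1 / 2 := min_le_left _ _
        have hδε : 2 * δ * ‖f‖ ≤ ε := by
          have : δ ≤ ε / (2 * ‖f‖) := min_le_right _ _
          rw [le_div_iff₀ (by positivity)] at this
          nlinarith
        obtain ⟨k, hkD, hkdist⟩ :=
          Metric.mem_closure_iff.mp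
            (hdense ((1 - δ) • u)) δ hδpos
        obtain ⟨g, hg⟩ := hkD
        have hdist : ‖k - (1 - δ) • u‖ < δ := by
          rw [← dist_eq_norm, dist_comm]
          exact hkdist
        have hknorm : ‖k‖ ≤ 1 := by
          have h1 : ‖k‖ ≤ ‖(1 - δ) • u‖ + ‖k - (1 - δ) • u‖ := by
            have := norm_add_le ((1 - δ) • u) (k - (1 - δ) • u)
            simpa using this
          have h2 : ‖(1 - δ) • u‖ = 1 - δ := by
            rw [norm_smul, hun, mul_one, Real.norm_eq_abs, abs_of_nonneg (by linarith)]
          linarith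
        have hinner : ‖f‖ - ε ≤ (inner ℝ f k : ℝ) := by
          have h1 : (inner ℝ f ((1 - δ) • u) : ℝ) = (1 - δ) * ‖f‖ := by
            rw [hu, inner_smul_right, real_inner_smul_right, real_inner_self_eq_norm_sq]
            field_simp
          have h2 : |(inner ℝ f (k - (1 - δ) • u) : ℝ)| ≤ ‖f‖ * δ := by
            calc |(inner ℝ f (k - (1 - δ) • u) : ℝ)| ≤ ‖f‖ * ‖k - (1 - δ) • u‖ :=
                  abs_real_inner_le_norm _ _
              _ ≤ ‖f‖ * δ := mul_le_mul_of_nonneg_left hdist.le (norm_nonneg _)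
          have h3 : (inner ℝ f k : ℝ) = (inner ℝ f ((1 - δ) • u) : ℝ)
              + (inner ℝ f (k - (1 - δ) • u) : ℝ) := by
            rw [← inner_add_right]
            congr 1
            abel
          have h4 := abs_le.mp h2
          nlinarith
        have hmem : (inner ℝ f k : ℝ) ∈ S (ι h) := by
          refine ⟨g, ?_, ?_⟩
          · rw [keynorm k g hg]
            nlinarith [norm_nonneg k]
          · have := keyg f k g hg
            rw [hf] at this ⊢
            rw [Cγ.apply_symm_apply] at this
            exact this
        have := le_csSup hbdd hmem
        linarith
    by_contra hc
    push_neg at hc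
    have := main ((‖h‖ - sSup (S (ι h))) / 2) (by linarith)
    linarith
  refine ⟨fun h => part1 h, ?_⟩
  ext b
  constructor
  · rintro ⟨h, rfl⟩
    exact ⟨‖h‖, fun r hr => bddS h r hr⟩
  · rintro ⟨M, hM⟩
    have hM0 : (0 : ℝ) ≤ M := hM (zero_mem b)
    -- main bound
    have claim : ∀ (k : K) (g : B →L[ℝ] ℝ), (e k : B → ℝ) =ᵐ[γ] ⇑g → g b ≤ M * ‖k‖ := by
      intro k g hg
      rcases eq_or_lt_of_le (norm_nonneg k) with h0 | h0
      · -- ‖k‖ = 0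
        have hk0 : k = 0 := norm_eq_zero.mp h0.symm
        by_contra hc
        push_neg at hc
        rw [← h0, mul_zero] at hc
        have hgb : g b ≠ 0 := by intro h'; rw [h'] at hc; exact lt_irrefl 0 hc
        set t : ℝ := (M + 1) / g b with ht
        have htg : (e (t • k) : B → ℝ) =ᵐ[γ] ⇑(t • g) := by
          have hsm' : e (t • k) = t • e k := _root_.map_smul e t k
          rw [hsm']
          exact (Lp.coeFn_smul t (e k)).trans (hg.const_smul t)
        have hmem : t * g b ∈ S b := by
          refine ⟨t • g, ?_, by simp⟩
          have := keynorm (t • k) (t • g) htg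
          simp only [ContinuousLinearMap.coe_smul'] at this
          rw [show (∫ x, ((t • g) x) ^ 2 ∂γ) = ‖t • k‖ ^ 2 from this, hk0, smul_zero,
            norm_zero]
          norm_num
        have h1 := hM hmem
        rw [ht, div_mul_cancel₀ _ hgb] at h1
        linarith
      · set c : ℝ := ‖k‖ with hc
        have hcg : (e (c⁻¹ • k) : B → ℝ) =ᵐ[γ] ⇑(c⁻¹ • g) := by
          have hsm' : e (c⁻¹ • k) = c⁻¹ • e k := _root_.map_smul e c⁻¹ k
          rw [hsm']
          exact (Lp.coeFn_smul c⁻¹ (e k)).trans (hg.const_smul c⁻¹)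
        have hk0 : k ≠ 0 := by
          refine norm_ne_zero_iff.mp ?_
          rw [← hc]
          exact h0.ne'
        have hmem : c⁻¹ * g b ∈ S b := by
          refine ⟨c⁻¹ • g, ?_, by simp⟩
          have := keynorm (c⁻¹ • k) (c⁻¹ • g) hcg
          simp only [ContinuousLinearMap.coe_smul'] at this
          rw [show (∫ x, ((c⁻¹ • g) x) ^ 2 ∂γ) = ‖c⁻¹ • k‖ ^ 2 from this]
          rw [hc, norm_smul, norm_inv, norm_norm,
            inv_mul_cancel₀ (norm_ne_zero_iff.mpr hk0)]
          norm_num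
        have h1 := hM hmem
        calc g b = c * (c⁻¹ * g b) := by field_simp
          _ ≤ c * M := by exact mul_le_mul_of_nonneg_left h1 h0.le
          _ = M * ‖k‖ := by rw [hc, mul_comm]
    have claim0 : ∀ g : B →L[ℝ] ℝ, (e (0 : K) : B → ℝ) =ᵐ[γ] ⇑g → g b = 0 := by
      intro g hg
      have h1 : g b ≤ 0 := by simpa using claim 0 g hg
      have hneg : (e (0 : K) : B → ℝ) =ᵐ[γ] ⇑(-g) := by
        have h2 : (e (0 : K) : B → ℝ) =ᵐ[γ] ⇑(e (0 : K)) := Filter.EventuallyEq.rfl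
        have h3 : ⇑(e (0 : K)) =ᵐ[γ] (0 : B → ℝ) := by
          have hzero : e (0 : K) = 0 := map_zero e
          rw [hzero]; exact Lp.coeFn_zero _ _ _
        have h4 : ⇑g =ᵐ[γ] (0 : B → ℝ) := (hg.symm.trans h3)
        refine h3.trans ?_
        filter_upwards [h4] with x hx
        simp [hx]
      have h2 : (-g) b ≤ 0 := by simpa using claim 0 (-g) hneg
      simp only [ContinuousLinearMap.neg_apply, neg_nonpos] at h2
      linarith
    set D' : Submodule ℝ K := cmDsub γ e with hD'
    -- well-definedness
    have wd : ∀ (k : D') (g : B →L[ℝ] ℝ), (e (k : K) : B → ℝ) =ᵐ[γ] ⇑g →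
        cmGsel γ e k b = g b := by
      intro k g hgk
      have hspec := cmGsel_spec γ e k
      have hd : (e (0 : K) : B → ℝ) =ᵐ[γ] ⇑(cmGsel γ e k - g) := by
        have hzero : e (0 : K) = 0 := map_zero e
        rw [hzero]
        have h1 : ⇑(cmGsel γ e k) =ᵐ[γ] ⇑g := hspec.symm.trans hgk
        refine (Lp.coeFn_zero ℝ 2 γ).trans ?_
        filter_upwards [h1] with z hz
        simp [ContinuousLinearMap.sub_apply, hz]
      have := claim0 (cmGsel γ e k - g) hd
      simp only [ContinuousLinearMap.sub_apply] at this
      linarith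
    let ψlin : D' →ₗ[ℝ] ℝ := cmPsiLin γ e b wd
    have ψbound : ∀ k : D', ‖ψlin k‖ ≤ M * ‖k‖ := by
      intro k
      have hspec := cmGsel_spec γ e k
      have h1 : (cmGsel γ e k) b ≤ M * ‖(k : K)‖ := claim (k : K) (cmGsel γ e k) hspec
      have hneg : (e (-(k : K)) : B → ℝ) =ᵐ[γ] ⇑(-(cmGsel γ e k)) := by
        have hneg' : e (-(k : K)) = -(e (k : K)) := map_neg e _
        rw [hneg']
        exact (Lp.coeFn_neg (e (k : K))).trans hspec.neg
      have h2 : (-(cmGsel γ e k)) b ≤ M * ‖-(k : K)‖ := claim (-(k : K)) _ hneg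
      rw [norm_neg] at h2
      simp only [ContinuousLinearMap.neg_apply] at h2
      rw [Real.norm_eq_abs]
      have hnk : ‖(k : K)‖ = ‖k‖ := rfl
      rw [← hnk]
      have hval : ψlin k = (cmGsel γ e k) b := rfl
      rw [hval]
      exact abs_le.mpr ⟨by linarith, h1⟩
    let ψ : D' →L[ℝ] ℝ := ψlin.mkContinuous M ψbound
    let j : D' →L[ℝ] K := D'.subtypeL
    have hjd : DenseRange j := by
      have hDset : Dense (D' : Set K) := hdense
      exact hDset.denseRange_val
    have hju : IsUniformInducing j := isUniformEmbedding_subtype_val.isUniformInducing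
    let φ : K →L[ℝ] ℝ := ψ.extend j
    set f₀ : K := (InnerProductSpace.toDual ℝ K).symm φ with hf₀def
    have hf₀ : ∀ k : K, (inner ℝ f₀ k : ℝ) = φ k := fun k =>
      InnerProductSpace.toDual_symm_apply
    refine ⟨Cγ f₀, ?_⟩
    apply (NormedSpace.eq_iff_forall_dual_eq ℝ).mpr
    intro g
    obtain ⟨k, hk⟩ := hsub g
    have hkD : k ∈ D' := ⟨g, hk⟩
    have hφk : φ k = ψ ⟨k, hkD⟩ := by
      exact ContinuousLinearMap.extend_eq (f := ψ) (e := j) hjd hju ⟨k, hkD⟩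
    have hval : ψ ⟨k, hkD⟩ = g b := wd ⟨k, hkD⟩ g hk
    calc g (ι (Cγ f₀)) = (inner ℝ f₀ k : ℝ) := keyg f₀ k g hk
      _ = φ k := hf₀ k
      _ = g b := by rw [hφk, hval]
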